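/- For the generic Cusp, the zero level surface H_t⁰ given parametrically by x(x₀) = (x₀/2)(1 ± √(1 − t²x₀²)), y(x₀) = (1/(2t))(t²x₀² − 1 ± √(1 − t²x₀²)) satisfies, for every x₀ with |t x₀| ≤ 1, the Hamilton–Jacobi relations: the point (x,y) = Φ_t(x₀', y₀') for some pre-image with A(x₀',y₀',x,y,t) + S₀(x₀',y₀') = 0. -/

import Mathlib

/-- The free flow map for the generic Cusp (`S₀(x₀,y₀) = x₀² y₀/2`). -/
noncomputable def cuspFlow (t : ℝ) (p : ℝ × ℝ) : ℝ × ℝ :=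
  (p.1 + t * p.1 * p.2, p.2 + t * p.1 ^ 2 / 2)

/-- The free action `A(x₀,y₀,x,y,t) = ((x−x₀)² + (y−y₀)²)/(2t)`. -/
noncomputable def cuspFreeAction (t x y x₀ y₀ : ℝ) : ℝ :=
  ((x - x₀) ^ 2 + (y - y₀) ^ 2) / (2 * t)

/-- The initial phase `S₀(x₀,y₀) = x₀² y₀ / 2`. -/
noncomputable def cuspS₀ (x₀ y₀ : ℝ) : ℝ := x₀ ^ 2 * y₀ / 2

/-- for the generic Cusp, every point of the parametric curve
`x(x₀) = (x₀/2)(1 ± √(1 − t²x₀²))`, `y(x₀) = (1/(2t))(t²x₀² − 1 ± √(1 − t²x₀²))`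
(for `|t x₀| ≤ 1`) lies on the zero level surface `H_t⁰`: it is the image under `Φ_t` of
a pre-image point at which the total action `A + S₀` vanishes. -/
theorem cusp_zero_level_surface (t x₀ : ℝ) (ht : 0 < t)
    (hx₀ : |t * x₀| ≤ 1) (sg : ℝ) (hsg : sg = 1 ∨ sg = -1) :
    ∀ x y : ℝ,
      x = (x₀ / 2) * (1 + sg * Real.sqrt (1 - t ^ 2 * x₀ ^ 2)) →
      y = (1 / (2 * t)) * (t ^ 2 * x₀ ^ 2 - 1 + sg * Real.sqrt (1 - t ^ 2 * x₀ ^ 2)) →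
      ∃ x₀' y₀' : ℝ,
        cuspFlow t (x₀', y₀') = (x, y) ∧
        cuspFreeAction t x y x₀' y₀' + cuspS₀ x₀' y₀' = 0 := by

  intro x y hx hy
  set s := Real.sqrt (1 - t ^ 2 * x₀ ^ 2) with hs
  have hnn : (0:ℝ) ≤ 1 - t ^ 2 * x₀ ^ 2 := by
    have h : (t * x₀) ^ 2 ≤ 1 ^ 2 := by
      have := sq_le_sq' (neg_le_of_abs_le hx₀) (le_of_abs_le hx₀)
      simpa using this
    nlinarith
  have hs2 : s ^ 2 = 1 - t ^ 2 * x₀ ^ 2 := Real.sq_sqrt hnn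
  have hsg2 : sg ^ 2 = 1 := by rcases hsg with h | h <;> simp [h]
  have ht' : t ≠ 0 := ne_of_gt ht
  refine ⟨x₀, (sg * s - 1) / (2 * t), ?_, ?_⟩
  · simp only [cuspFlow, Prod.mk.injEq]
    constructor
    · rw [hx]; field_simp; ring
    · rw [hy]; field_simp; ring
  · simp only [cuspFreeAction, cuspS₀]
    rw [hx, hy]
    field_simp
    linear_combination ((x₀ ^ 2 * t ^ 2) * s ^ 2) * hsg2 + (x₀ ^ 2 * t ^ 2) * hs2
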